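/- Let p > 1, let a, b be vectors in a real inner product space, and let s ≥ 0. Then ‖a‖^p − p s^{p−1} ‖b‖^{p−2} ⟨b, a⟩ + (p−1) s^p ‖b‖^p ≥ 0. Moreover, if b ≠ 0, then equality holds if and only if a = s b. -/

import Mathlib

open Real

private lemma rpow_self_mul {p x : ℝ} (hp : 1 < p) (hx : 0 ≤ x) :
    x * x ^ (p - 1) = x ^ p := by
  rcases hx.eq_or_lt with h | h
  · rw [← h, Real.zero_rpow (show p - 1 ≠ 0 by linarith),
      Real.zero_rpow (show p ≠ 0 by linarith), mul_zero]
  · rw [show x * x ^ (p-1) = x ^ (1:ℝ) * x ^ (p-1) by rw [Real.rpow_one],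
      ← Real.rpow_add h]
    ring_nf

private lemma picone_young {p : ℝ} (hp : 1 < p) {A B : ℝ} (hA : 0 ≤ A) (hB : 0 ≤ B) :
    0 ≤ A ^ p + (p - 1) * B ^ p - p * (A * B ^ (p - 1)) ∧
    (A ^ p + (p - 1) * B ^ p - p * (A * B ^ (p - 1)) = 0 ↔ A = B) := by
  rcases hB.eq_or_lt with h | h
  · rw [← h, Real.zero_rpow (by linarith : (p:ℝ) - 1 ≠ 0),
      Real.zero_rpow (by linarith : (p:ℝ) ≠ 0)]
    simp only [mul_zero, add_zero, sub_zero]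
    constructor
    · exact Real.rpow_nonneg hA p
    · rw [Real.rpow_eq_zero hA (by linarith)]
  · -- B > 0 : use Bernoulli with s = A/B - 1
    have hABs : (-1:ℝ) ≤ A / B - 1 := by
      have : 0 ≤ A / B := div_nonneg hA h.le
      linarith
    have key : 1 + p * (A / B - 1) ≤ (1 + (A / B - 1)) ^ p :=
      one_add_mul_self_le_rpow_one_add hABs hp.le
    have hBp : 0 < B ^ p := Real.rpow_pos_of_pos h p
    have hdiv : (1 + (A / B - 1)) ^ p = A ^ p / B ^ p := by
      rw [show 1 + (A / B - 1) = A / B by ring, Real.div_rpow hA h.le]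
    have hBB : B * B ^ (p - 1) = B ^ p := rpow_self_mul hp h.le
    have hAB : A * B ^ (p - 1) = (A / B) * B ^ p := by
      field_simp
      linear_combination A * hBB
    have hineq : 0 ≤ A ^ p + (p - 1) * B ^ p - p * (A * B ^ (p - 1)) := by
      rw [hAB]
      have := mul_le_mul_of_nonneg_right key hBp.le
      rw [hdiv, div_mul_cancel₀ _ hBp.ne'] at this
      nlinarith
    refine ⟨hineq, ?_, ?_⟩
    · intro heq
      by_contra hne
      have hs' : A / B - 1 ≠ 0 := by
        intro h0
        apply hne
        have : A / B = 1 := by linarith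
        field_simp at this
        linarith
      have key' : 1 + p * (A / B - 1) < (1 + (A / B - 1)) ^ p :=
        one_add_mul_self_lt_rpow_one_add hABs hs' hp
      have := mul_lt_mul_of_pos_right key' hBp
      rw [hdiv, div_mul_cancel₀ _ hBp.ne'] at this
      rw [hAB] at heq
      nlinarith
    · rintro rfl
      rw [hBB]
      ring

/-- Algebraic core of the nonlinear Picone identity: for `p > 1`, vectors `a, b` in a real
inner product space and `s ≥ 0`,
`‖a‖^p − p s^{p−1} ‖b‖^{p−2} ⟨b, a⟩ + (p−1) s^p ‖b‖^p ≥ 0`,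
with equality (for `b ≠ 0`) iff `a = s • b`. -/
theorem picone_pointwise {E : Type*} [NormedAddCommGroup E] [InnerProductSpace ℝ E]
    (p : ℝ) (hp : 1 < p) (a b : E) (s : ℝ) (hs : 0 ≤ s) :
    0 ≤ ‖a‖ ^ p - p * s ^ (p - 1) * (‖b‖ ^ (p - 2) * (inner ℝ b a : ℝ)) +
        (p - 1) * s ^ p * ‖b‖ ^ p ∧
    (b ≠ 0 →
      (‖a‖ ^ p - p * s ^ (p - 1) * (‖b‖ ^ (p - 2) * (inner ℝ b a : ℝ)) +
          (p - 1) * s ^ p * ‖b‖ ^ p = 0 ↔ a = s • b)) := by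
  set A := ‖a‖ with hAdef
  set nb := ‖b‖ with hnbdef
  have hA : 0 ≤ A := norm_nonneg a
  have hnb : 0 ≤ nb := norm_nonneg b
  have hB : 0 ≤ s * nb := mul_nonneg hs hnb
  obtain ⟨hy1, hy2⟩ := picone_young hp hA hB
  -- rewrite (s*nb)^p and (s*nb)^(p-1)
  have hBp : (s * nb) ^ p = s ^ p * nb ^ p := Real.mul_rpow hs hnb
  have hBp1 : (s * nb) ^ (p - 1) = s ^ (p - 1) * nb ^ (p - 1) := Real.mul_rpow hs hnb
  -- nb^(p-2) * nb = nb^(p-1)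
  have hnb12 : nb ^ (p - 2) * nb = nb ^ (p - 1) := by
    rcases hnb.eq_or_lt with h | h
    · rw [← h, mul_zero, Real.zero_rpow (by linarith : (p:ℝ) - 1 ≠ 0)]
    · rw [show nb ^ (p-2) * nb = nb ^ (p-2) * nb ^ (1:ℝ) by rw [Real.rpow_one],
        ← Real.rpow_add h]
      ring_nf
  -- Cauchy-Schwarz part
  have hCS : (inner ℝ b a : ℝ) ≤ nb * A := real_inner_le_norm b a
  have hsp1 : 0 ≤ s ^ (p - 1) := Real.rpow_nonneg hs _
  have hnbp2 : 0 ≤ nb ^ (p - 2) := Real.rpow_nonneg hnb _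
  have hcs0 : 0 ≤ p * s ^ (p - 1) * (nb ^ (p - 2) * (nb * A - (inner ℝ b a : ℝ))) := by
    apply mul_nonneg (mul_nonneg (by linarith) hsp1)
    exact mul_nonneg hnbp2 (by linarith)
  -- Decomposition of the expression
  have hdecomp :
      A ^ p - p * s ^ (p - 1) * (nb ^ (p - 2) * (inner ℝ b a : ℝ)) +
          (p - 1) * s ^ p * nb ^ p =
        (A ^ p + (p - 1) * (s * nb) ^ p - p * (A * (s * nb) ^ (p - 1))) +
          p * s ^ (p - 1) * (nb ^ (p - 2) * (nb * A - (inner ℝ b a : ℝ))) := by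
    rw [hBp, hBp1, ← hnb12]
    ring
  constructor
  · rw [hdecomp]; linarith
  · intro hb
    have hnb' : 0 < nb := norm_pos_iff.mpr hb
    constructor
    · intro heq
      rw [hdecomp] at heq
      have h1 : A ^ p + (p - 1) * (s * nb) ^ p - p * (A * (s * nb) ^ (p - 1)) = 0 := by
        linarith
      have hAeq : A = s * nb := hy2.mp h1
      rcases hs.eq_or_lt with hs0 | hs0
      · -- s = 0 : then A = 0, a = 0
        have : A = 0 := by rw [hAeq, ← hs0, zero_mul]
        have ha0 : a = 0 := norm_eq_zero.mp this
        rw [ha0, ← hs0, zero_smul]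
      · -- s > 0
        have h2 : p * s ^ (p - 1) * (nb ^ (p - 2) * (nb * A - (inner ℝ b a : ℝ))) = 0 := by
          linarith
        have hsp1' : 0 < s ^ (p - 1) := Real.rpow_pos_of_pos hs0 _
        have hnbp2' : 0 < nb ^ (p - 2) := Real.rpow_pos_of_pos hnb' _
        have hI : (inner ℝ b a : ℝ) = nb * A := by
          have hpne : (0:ℝ) < p := by linarith
          have := mul_eq_zero.mp h2
          rcases this with h' | h'
          · exact absurd h' (mul_ne_zero hpne.ne' hsp1'.ne')
          · rcases mul_eq_zero.mp h' with h'' | h''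
            · exact absurd h'' hnbp2'.ne'
            · linarith
        have hI' : (inner ℝ b a : ℝ) = ‖b‖ * ‖a‖ := hI
        have hsmul : ‖a‖ • b = ‖b‖ • a := inner_eq_norm_mul_iff_real.mp hI'
        have hkey : ‖b‖ • a = ‖b‖ • (s • b) := by
          rw [← hsmul, ← hAdef, hAeq, mul_comm, mul_smul]
        exact smul_right_injective E hnb'.ne' hkey
    · rintro rfl
      have hA' : A = s * nb := by
        rw [hAdef, norm_smul, Real.norm_eq_abs, abs_of_nonneg hs]
      have hI2 : (inner ℝ b (s • b) : ℝ) = s * (nb * nb) := by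
        rw [real_inner_smul_right, real_inner_self_eq_norm_mul_norm]
      rw [hdecomp, hy2.mpr hA', hI2, hA']
      ring
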